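/- Any maximal ℓ-disjoint family of k-element subsets of {1,...,n} (where ℓ ≤ k ≤ n) has at least ⌈C(n,ℓ)/C(k,ℓ)²⌉ members. Here a family is ℓ-disjoint if no two distinct members share ℓ or more elements, and maximal means no k-subset can be added while preserving ℓ-disjointness. -/

import Mathlib

open Finset

/-- The number of `k`-subsets of `range n` containing a fixed `ℓ`-set `M` is at most
`(n-ℓ).choose (k-ℓ)`. -/
lemma fiber_card_le (n k ℓ : ℕ) (M : Finset ℕ) (hM : M ⊆ Finset.range n)
    (hMc : M.card = ℓ) :
    ({S ∈ (Finset.range n).powersetCard k | M ⊆ S}).card ≤ (n - ℓ).choose (k - ℓ) := by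
  have h1 : ({S ∈ (Finset.range n).powersetCard k | M ⊆ S}).card
      ≤ ((Finset.range n \ M).powersetCard (k - ℓ)).card := by
    apply Finset.card_le_card_of_injOn (fun S => S \ M)
    · intro S hS
      simp only [mem_coe, mem_filter, mem_powersetCard] at hS
      obtain ⟨⟨hSr, hSc⟩, hMS⟩ := hS
      rw [mem_coe, mem_powersetCard]
      exact ⟨sdiff_subset_sdiff hSr (le_refl M), by rw [card_sdiff_of_subset hMS, hSc, hMc]⟩
    · intro S1 h1 S2 h2 he
      simp only [coe_filter, Set.mem_setOf_eq] at h1 h2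
      have e1 : S1 = S1 \ M ∪ M := (sdiff_union_of_subset h1.2).symm
      have e2 : S2 = S2 \ M ∪ M := (sdiff_union_of_subset h2.2).symm
      simp only [] at he
      rw [e1, e2, he]
  rwa [card_powersetCard, card_sdiff_of_subset hM, card_range, hMc] at h1

theorem key_count (n k ℓ : ℕ) (hlk : ℓ ≤ k) (hkn : k ≤ n)
    (H : Finset (Finset ℕ))
    (hmem : ∀ A ∈ H, A ⊆ Finset.range n ∧ A.card = k)
    (hmax : ∀ S : Finset ℕ, S ⊆ Finset.range n → S.card = k → S ∉ H →
      ∃ B ∈ H, ℓ ≤ (S ∩ B).card) :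
    n.choose ℓ ≤ H.card * (k.choose ℓ)^2 := by
  classical
  set X : Finset (Finset ℕ) := H.biUnion (fun B => B.powersetCard ℓ) with hX
  have hXcard : X.card ≤ H.card * k.choose ℓ := by
    calc X.card ≤ ∑ B ∈ H, (B.powersetCard ℓ).card := card_biUnion_le
      _ = ∑ B ∈ H, k.choose ℓ := by
          apply Finset.sum_congr rfl
          intro B hB
          rw [card_powersetCard, (hmem B hB).2]
      _ = H.card * k.choose ℓ := by rw [Finset.sum_const, smul_eq_mul]
  -- every k-subset of range n contains a member of X
  have hcov : ∀ S ∈ (Finset.range n).powersetCard k, ∃ M ∈ X, M ⊆ S := by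
    intro S hS
    rw [mem_powersetCard] at hS
    obtain ⟨hSr, hSc⟩ := hS
    by_cases hSH : S ∈ H
    · obtain ⟨M, hMS, hMc⟩ := Finset.exists_subset_card_eq (s := S) (n := ℓ) (by omega)
      exact ⟨M, Finset.mem_biUnion.2 ⟨S, hSH, mem_powersetCard.2 ⟨hMS, hMc⟩⟩, hMS⟩
    · obtain ⟨B, hB, hlB⟩ := hmax S hSr hSc hSH
      obtain ⟨M, hMS, hMc⟩ := Finset.exists_subset_card_eq hlB
      exact ⟨M, Finset.mem_biUnion.2 ⟨B, hB,
        mem_powersetCard.2 ⟨hMS.trans inter_subset_right, hMc⟩⟩,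
        hMS.trans inter_subset_left⟩
  -- choose for each S such an M
  let f : Finset ℕ → Finset ℕ := fun S =>
    if h : ∃ M, M ∈ X ∧ M ⊆ S then h.choose else ∅
  have hf : ∀ S ∈ (Finset.range n).powersetCard k, f S ∈ X ∧ f S ⊆ S := by
    intro S hS
    obtain ⟨M, hMX, hMS⟩ := hcov S hS
    have h : ∃ M, M ∈ X ∧ M ⊆ S := ⟨M, hMX, hMS⟩
    simp only [f, dif_pos h]
    exact h.choose_spec
  -- double counting
  have hXmem : ∀ M ∈ X, M ⊆ Finset.range n ∧ M.card = ℓ := by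
    intro M hM
    obtain ⟨B, hB, hMB⟩ := Finset.mem_biUnion.1 hM
    rw [mem_powersetCard] at hMB
    exact ⟨hMB.1.trans (hmem B hB).1, hMB.2⟩
  have hmain : ((Finset.range n).powersetCard k).card ≤ (n - ℓ).choose (k - ℓ) * X.card := by
    apply Finset.card_le_mul_card_image_of_maps_to (f := f)
      (fun S hS => (hf S hS).1)
    intro M hM
    calc ({S ∈ (Finset.range n).powersetCard k | f S = M}).card
        ≤ ({S ∈ (Finset.range n).powersetCard k | M ⊆ S}).card := by
          apply Finset.card_le_card
          intro S hS
          rw [mem_filter] at hS ⊢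
          exact ⟨hS.1, hS.2 ▸ (hf S hS.1).2⟩
      _ ≤ (n - ℓ).choose (k - ℓ) := fiber_card_le n k ℓ M (hXmem M hM).1 (hXmem M hM).2
  rw [card_powersetCard, card_range] at hmain
  have h2 : n.choose k ≤ (n - ℓ).choose (k - ℓ) * (H.card * k.choose ℓ) :=
    hmain.trans (Nat.mul_le_mul_left _ hXcard)
  have hid : n.choose k * k.choose ℓ = n.choose ℓ * (n - ℓ).choose (k - ℓ) :=
    Nat.choose_mul hlk
  have hpos : 0 < (n - ℓ).choose (k - ℓ) :=
    Nat.choose_pos (by omega)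
  have h3 : n.choose ℓ * (n - ℓ).choose (k - ℓ)
      ≤ H.card * (k.choose ℓ)^2 * (n - ℓ).choose (k - ℓ) := by
    rw [← hid]
    calc n.choose k * k.choose ℓ
        ≤ ((n - ℓ).choose (k - ℓ) * (H.card * k.choose ℓ)) * k.choose ℓ :=
          Nat.mul_le_mul_right _ h2
      _ = H.card * (k.choose ℓ)^2 * (n - ℓ).choose (k - ℓ) := by ring
  exact Nat.le_of_mul_le_mul_right h3 hpos

/-- Any maximal ℓ-disjoint family of k-element subsets of {1,...,n} (ℓ ≤ k ≤ n)
has at least ⌈C(n,ℓ)/C(k,ℓ)²⌉ members. -/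
theorem stmt0 (n k ℓ : ℕ) (hlk : ℓ ≤ k) (hkn : k ≤ n)
    (H : Finset (Finset ℕ))
    (hmem : ∀ A ∈ H, A ⊆ Finset.range n ∧ A.card = k)
    (hdisj : ∀ A ∈ H, ∀ B ∈ H, A ≠ B → (A ∩ B).card < ℓ)
    (hmax : ∀ S : Finset ℕ, S ⊆ Finset.range n → S.card = k → S ∉ H →
      ∃ B ∈ H, ℓ ≤ (S ∩ B).card) :
    (⌈(n.choose ℓ : ℚ) / (k.choose ℓ : ℚ) ^ 2⌉ : ℤ) ≤ H.card := by
  have hkey := key_count n k ℓ hlk hkn H hmem hmax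
  rw [Int.ceil_le]
  push_cast
  rw [div_le_iff₀ (by have := Nat.choose_pos hlk; positivity : (0:ℚ) < (k.choose ℓ : ℚ)^2)]
  exact_mod_cast hkey
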